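/- Let n(t) := (cos t, sin t, 0) and fix κ² > 0. Define c_κ² := 1 if κ² ≥ 3, and c_κ² := (κ² − √(κ⁴ + 16) + 4)/2 if 0 < κ² ≤ 3. Then for every C¹ 2π-periodic u : ℝ → ℝ³, ∫_{−π}^{π} |u'(t)|² dt + κ² ∫_{−π}^{π} |u(t) × n(t)|² dt ≥ c_κ² ∫_{−π}^{π} |u(t)|² dt. -/

import Mathlib

open Real Set MeasureTheory

/-- Squared Euclidean norm of a vector in `ℝ³`. -/
noncomputable def sq3 (v : Fin 3 → ℝ) : ℝ := v 0 ^ 2 + v 1 ^ 2 + v 2 ^ 2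

/-- The outward unit normal `n(t) = (cos t, sin t, 0)` to the unit circle. -/
noncomputable def nvec (t : ℝ) : Fin 3 → ℝ := ![Real.cos t, Real.sin t, 0]

/-- The optimal Poincaré constant `c_κ²`. -/
noncomputable def poincareConst (κ : ℝ) : ℝ :=
  if 3 ≤ κ ^ 2 then 1 else (κ ^ 2 - Real.sqrt (κ ^ 4 + 16) + 4) / 2

open Complex AddCircle
open scoped ENNReal

noncomputable section


private lemma two_pi_pos' : (0:ℝ) < 2 * π := by linarith [Real.pi_pos]

private instance fact_two_pi : Fact ((0:ℝ) < 2 * π) := ⟨two_pi_pos'⟩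

private lemma negpi_lt : (-π : ℝ) < -π + 2 * π := by linarith [Real.pi_pos]

/-- weighted AM-GM -/
private lemma amgm (k A B X Y : ℝ) (hA : 0 < A) (hB : 0 < B) (hX : 0 ≤ X) (hY : 0 ≤ Y)
    (hk : 0 ≤ k) (h : k ^ 2 ≤ A * B) : k * (X * Y) ≤ (A * X ^ 2 + B * Y ^ 2) / 2 := by
  have hsA : Real.sqrt A ^ 2 = A := Real.sq_sqrt hA.le
  have hsB : Real.sqrt B ^ 2 = B := Real.sq_sqrt hB.le
  have h1 : k ≤ Real.sqrt A * Real.sqrt B := by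
    calc k = Real.sqrt (k ^ 2) := (Real.sqrt_sq hk).symm
      _ ≤ Real.sqrt (A * B) := Real.sqrt_le_sqrt h
      _ = Real.sqrt A * Real.sqrt B := Real.sqrt_mul hA.le B
  nlinarith [sq_nonneg (Real.sqrt A * X - Real.sqrt B * Y),
    mul_nonneg hX hY, Real.sqrt_nonneg A, Real.sqrt_nonneg B]

/-- the determinant condition at every integer mode -/
private lemma detfact (g k : ℝ) (hg : 0 < g) (h1 : k ^ 2 / 2 ≤ 1 + g)
    (h0 : k ^ 4 / 4 ≤ g * (4 + g)) (n : ℤ) :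
    k ^ 4 / 4 ≤ ((n : ℝ) ^ 2 + g) * ((2 - (n : ℝ)) ^ 2 + g) := by
  by_cases hn : n = 1
  · subst hn; push_cast; nlinarith
  · have hx : (n : ℝ) * (2 - (n : ℝ)) ≤ 0 := by
      rcases lt_or_ge n 1 with h | h
      · have h' : n ≤ 0 := by omega
        have hr : (n : ℝ) ≤ 0 := by exact_mod_cast h'
        nlinarith
      · have h' : (2:ℤ) ≤ n := by omega
        have hr : (2:ℝ) ≤ (n : ℝ) := by exact_mod_cast h'
        nlinarith
    nlinarith [mul_nonneg (neg_nonneg.2 hx) (by linarith : (0:ℝ) ≤ 2*g - (n:ℝ)*(2-(n:ℝ)))]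

private lemma fourier_eq' (m : ℤ) (x : ℝ) :
    (fourier m (x : AddCircle (2 * π)) : ℂ) = Complex.exp ((m : ℂ) * x * Complex.I) := by
  rw [fourier_coe_apply]
  congr 1
  have hπ : (π : ℂ) ≠ 0 := Complex.ofReal_ne_zero.2 Real.pi_ne_zero
  push_cast
  field_simp

private lemma intcong {E : Type*} [NormedAddCommGroup E] [NormedSpace ℝ E]
    (F G : ℝ → E) (h : ∀ t ∈ Ioo (-π) (-π + 2 * π), F t = G t) :
    ∫ t in (-π)..(-π + 2 * π), F t = ∫ t in (-π)..(-π + 2 * π), G t := by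
  rw [intervalIntegral.integral_of_le negpi_lt.le, intervalIntegral.integral_of_le negpi_lt.le,
    integral_Ioc_eq_integral_Ioo, integral_Ioc_eq_integral_Ioo]
  exact setIntegral_congr_fun measurableSet_Ioo h

private lemma haar_interval {E : Type*} [NormedAddCommGroup E] [NormedSpace ℝ E]
    (φ : AddCircle (2 * π) → E) :
    ∫ t in (-π)..(-π + 2 * π), φ (t : AddCircle (2 * π)) = (2 * π) • ∫ ξ, φ ξ ∂haarAddCircle := by
  rw [AddCircle.intervalIntegral_preimage (2 * π) (-π) φ, volume_eq_smul_haarAddCircle,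
    integral_smul_measure, ENNReal.toReal_ofReal two_pi_pos'.le]

private def FC (w : ℝ → ℂ) (n : ℤ) : ℂ :=
  fourierCoeff (AddCircle.liftIco (2 * π) (-π) w) n

private lemma FC_eq_integral (w : ℝ → ℂ) (n : ℤ) :
    FC w n = (1 / (2 * π) : ℝ) • ∫ x in (-π)..(-π + 2 * π),
      Complex.exp ((-n : ℂ) * x * Complex.I) * w x := by
  rw [FC, fourierCoeff_eq_intervalIntegral _ n (-π)]
  congr 1
  apply intcong
  intro t ht
  rw [AddCircle.liftIco_coe_apply (Ioo_subset_Ico_self ht), smul_eq_mul, fourier_eq']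
  push_cast
  ring_nf

private lemma exp_boundary (m : ℤ) :
    Complex.exp ((m : ℂ) * (-π + 2 * π) * Complex.I) = Complex.exp ((m : ℂ) * (-π) * Complex.I) := by
  rw [show (m : ℂ) * (-π + 2 * π) * Complex.I
      = (m : ℂ) * (-π) * Complex.I + m * (2 * π * Complex.I) by push_cast; ring,
    Complex.exp_add, Complex.exp_int_mul_two_pi_mul_I, mul_one]

private lemma hasDerivAt_E (c : ℂ) (x : ℝ) :
    HasDerivAt (fun y : ℝ => Complex.exp (c * y * Complex.I))
      (Complex.exp (c * x * Complex.I) * (c * Complex.I)) x := by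
  have h1 : HasDerivAt (fun y : ℝ => c * y * Complex.I) (c * Complex.I) x := by
    simpa using ((hasDerivAt_id x).ofReal_comp.const_mul c).mul_const Complex.I
  simpa using h1.cexp

private lemma FC_deriv (w : ℝ → ℂ) (hw : ContDiff ℝ 1 w) (hwp : ∀ t, w (t + 2 * π) = w t)
    (n : ℤ) : FC (deriv w) n = Complex.I * n * FC w n := by
  have hE : ∀ x ∈ uIcc (-π) (-π + 2 * π),
      HasDerivAt (fun y : ℝ => Complex.exp ((-n : ℂ) * y * Complex.I))
        (Complex.exp ((-n : ℂ) * x * Complex.I) * ((-n : ℂ) * Complex.I)) x :=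
    fun x _ => hasDerivAt_E (-n : ℂ) x
  have hw' : ∀ x ∈ uIcc (-π) (-π + 2 * π), HasDerivAt w (deriv w x) x :=
    fun x _ => (hw.differentiable one_ne_zero x).hasDerivAt
  have hcontE : Continuous fun y : ℝ => Complex.exp ((-n : ℂ) * y * Complex.I) := by
    fun_prop
  have hcontE' : Continuous fun y : ℝ =>
      Complex.exp ((-n : ℂ) * y * Complex.I) * ((-n : ℂ) * Complex.I) := by fun_prop
  have parts := intervalIntegral.integral_mul_deriv_eq_deriv_mul hE hw'
    (hcontE'.intervalIntegrable _ _) ((hw.continuous_deriv le_rfl).intervalIntegrable _ _)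
  -- boundary term vanishes
  push_cast at parts
  have hbd0 := exp_boundary (-n)
  push_cast at hbd0
  rw [hbd0, hwp (-π), sub_self, zero_sub] at parts
  have hpull : ∫ x in (-π)..(-π + 2 * π),
      Complex.exp ((-n : ℂ) * x * Complex.I) * ((-n : ℂ) * Complex.I) * w x
      = ((-n : ℂ) * Complex.I) * ∫ x in (-π)..(-π + 2 * π),
          Complex.exp ((-n : ℂ) * x * Complex.I) * w x := by
    rw [← intervalIntegral.integral_const_mul]
    apply intervalIntegral.integral_congr
    intro x _
    ring
  rw [hpull] at parts
  rw [FC_eq_integral, FC_eq_integral, parts]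
  rw [Complex.real_smul, Complex.real_smul]
  push_cast
  ring

private lemma interval_conj (f : ℝ → ℂ) (a b : ℝ) :
    (starRingEnd ℂ) (∫ t in a..b, f t) = ∫ t in a..b, (starRingEnd ℂ) (f t) := by
  rw [intervalIntegral, intervalIntegral, map_sub, ← integral_conj, ← integral_conj]

private lemma FC_conj (w : ℝ → ℂ) (n : ℤ) :
    FC (fun t => (starRingEnd ℂ) (w t) * Complex.exp (((2 * t : ℝ) : ℂ) * Complex.I)) n
      = (starRingEnd ℂ) (FC w (2 - n)) := by
  rw [FC_eq_integral, FC_eq_integral, Complex.real_smul, Complex.real_smul, map_mul,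
    Complex.conj_ofReal, interval_conj]
  congr 1
  apply intervalIntegral.integral_congr
  intro x _
  show Complex.exp (-(n : ℂ) * x * Complex.I) * ((starRingEnd ℂ) (w x)
      * Complex.exp (((2 * x : ℝ) : ℂ) * Complex.I))
    = (starRingEnd ℂ) (Complex.exp (-((2 - n : ℤ) : ℂ) * x * Complex.I) * w x)
  rw [map_mul, ← Complex.exp_conj]
  have h1 : (starRingEnd ℂ) (-((2 - n : ℤ) : ℂ) * x * Complex.I)
      = ((2 - n : ℤ) : ℂ) * x * Complex.I := by
    simp only [map_mul, map_neg, Complex.conj_ofReal, Complex.conj_I, map_intCast]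
    ring
  rw [h1, mul_comm (Complex.exp _) ((starRingEnd ℂ) (w x)), mul_comm ((starRingEnd ℂ) (w x)) _,
    ← mul_assoc, ← Complex.exp_add, mul_comm _ ((starRingEnd ℂ) (w x))]
  congr 2
  push_cast
  ring

private def cmap (w : ℝ → ℂ) (hw : Continuous w) (hwp : ∀ t, w (t + 2 * π) = w t) :
    C(AddCircle (2 * π), ℂ) :=
  ⟨AddCircle.liftIco (2 * π) (-π) w,
    AddCircle.liftIco_continuous ((hwp (-π)).symm) hw.continuousOn⟩

private lemma cmap_coeff (w : ℝ → ℂ) (hw : Continuous w) (hwp : ∀ t, w (t + 2 * π) = w t)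
    (n : ℤ) :
    fourierCoeff ((ContinuousMap.toLp (p := 2) haarAddCircle ℂ (cmap w hw hwp) :
      Lp ℂ 2 haarAddCircle) : AddCircle (2 * π) → ℂ) n = FC w n :=
  fourierCoeff_toLp (cmap w hw hwp) n

private lemma cmap_ae (w : ℝ → ℂ) (hw : Continuous w) (hwp : ∀ t, w (t + 2 * π) = w t) :
    ((ContinuousMap.toLp (p := 2) haarAddCircle ℂ (cmap w hw hwp) :
      Lp ℂ 2 haarAddCircle) : AddCircle (2 * π) → ℂ) =ᵐ[haarAddCircle] ⇑(cmap w hw hwp) :=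
  ContinuousMap.coeFn_toLp (𝕜 := ℂ) haarAddCircle (cmap w hw hwp)

private lemma cmap_interval {E : Type*} [NormedAddCommGroup E] [NormedSpace ℝ E]
    (w : ℝ → ℂ) (hw : Continuous w) (hwp : ∀ t, w (t + 2 * π) = w t) (f : ℂ → E) :
    ∫ t in (-π)..(-π + 2 * π), f (w t)
      = (2 * π) • ∫ ξ, f (cmap w hw hwp ξ) ∂haarAddCircle := by
  rw [← haar_interval (fun ξ => f (cmap w hw hwp ξ))]
  apply intcong
  intro t ht
  rw [show cmap w hw hwp (↑t) = w t from AddCircle.liftIco_coe_apply (Ioo_subset_Ico_self ht)]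

private lemma parsevalP (w : ℝ → ℂ) (hw : Continuous w) (hwp : ∀ t, w (t + 2 * π) = w t) :
    Summable (fun n : ℤ => ‖FC w n‖ ^ 2) ∧
    2 * π * ∑' n : ℤ, ‖FC w n‖ ^ 2 = ∫ t in (-π)..(-π + 2 * π), ‖w t‖ ^ 2 := by
  set WL := ContinuousMap.toLp (p := 2) haarAddCircle ℂ (cmap w hw hwp) with hWL
  have hsum : Summable (fun n : ℤ => ‖FC w n‖ ^ 2) := by
    have h0 : Summable (fun n : ℤ => ‖fourierBasis.repr WL n‖ ^ ((2 : ℝ≥0∞)).toReal) :=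
      (fourierBasis.repr WL).property.summable (by norm_num)
    have h1 : ∀ n : ℤ, ‖fourierBasis.repr WL n‖ ^ ((2 : ℝ≥0∞)).toReal = ‖FC w n‖ ^ 2 := by
      intro n
      rw [fourierBasis_repr, cmap_coeff w hw hwp n]
      norm_num
    have h2 : (fun n : ℤ => ‖FC w n‖ ^ 2)
        = fun n : ℤ => ‖fourierBasis.repr WL n‖ ^ ((2 : ℝ≥0∞)).toReal :=
      funext fun n => (h1 n).symm
    rw [h2]
    exact h0
  refine ⟨hsum, ?_⟩
  have hpars := tsum_sq_fourierCoeff WL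
  simp only [show ∀ n, fourierCoeff (WL : AddCircle (2 * π) → ℂ) n = FC w n from cmap_coeff w hw hwp] at hpars
  rw [hpars]
  have hae : ∫ ξ, ‖(WL : AddCircle (2 * π) → ℂ) ξ‖ ^ 2 ∂haarAddCircle
      = ∫ ξ, ‖cmap w hw hwp ξ‖ ^ 2 ∂haarAddCircle := by
    apply integral_congr_ae
    filter_upwards [cmap_ae w hw hwp] with ξ hξ
    rw [hξ]
  rw [hae, ← smul_eq_mul, cmap_interval w hw hwp (fun ζ => ‖ζ‖ ^ 2)]

private lemma parseval_innerP (w v : ℝ → ℂ) (hw : Continuous w) (hv : Continuous v)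
    (hwp : ∀ t, w (t + 2 * π) = w t) (hvp : ∀ t, v (t + 2 * π) = v t) :
    Summable (fun n : ℤ => (starRingEnd ℂ) (FC w n) * FC v n) ∧
    (2 * π : ℝ) • ∑' n : ℤ, (starRingEnd ℂ) (FC w n) * FC v n
      = ∫ t in (-π)..(-π + 2 * π), (starRingEnd ℂ) (w t) * v t := by
  set WL := ContinuousMap.toLp (p := 2) haarAddCircle ℂ (cmap w hw hwp) with hWL
  set VL := ContinuousMap.toLp (p := 2) haarAddCircle ℂ (cmap v hv hvp) with hVL
  have hterm : ∀ n : ℤ,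
      (inner (𝕜 := ℂ) WL (fourierBasis (T := 2 * π) n)) * (inner (𝕜 := ℂ) (fourierBasis n) VL)
        = (starRingEnd ℂ) (FC w n) * FC v n := by
    intro n
    have h1 : inner (𝕜 := ℂ) (fourierBasis (T := 2 * π) n) VL = FC v n := by
      rw [← fourierBasis.repr_apply_apply, fourierBasis_repr, cmap_coeff]
    have h2 : inner (𝕜 := ℂ) (fourierBasis (T := 2 * π) n) WL = FC w n := by
      rw [← fourierBasis.repr_apply_apply, fourierBasis_repr, cmap_coeff]
    rw [← inner_conj_symm WL (fourierBasis n), h1, h2]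
  constructor
  · have h0 := fourierBasis.summable_inner_mul_inner WL VL
    have h2 : (fun n : ℤ => (starRingEnd ℂ) (FC w n) * FC v n)
        = fun n : ℤ => (inner (𝕜 := ℂ) WL (fourierBasis n)) * (inner (𝕜 := ℂ) (fourierBasis n) VL) :=
      funext fun n => (hterm n).symm
    rw [h2]
    exact h0
  · have h0 := fourierBasis.tsum_inner_mul_inner WL VL
    simp only [hterm] at h0
    rw [h0]
    have hinner : (inner (𝕜 := ℂ) WL VL)
        = ∫ ξ, (starRingEnd ℂ) ((WL : AddCircle (2 * π) → ℂ) ξ) * (VL : AddCircle (2 * π) → ℂ) ξ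
            ∂haarAddCircle := by
      rw [MeasureTheory.L2.inner_def]
      simp [RCLike.inner_apply]
      congr 1; funext a; ring
    rw [hinner]
    have hae : ∫ ξ, (starRingEnd ℂ) ((WL : AddCircle (2 * π) → ℂ) ξ)
          * (VL : AddCircle (2 * π) → ℂ) ξ ∂haarAddCircle
        = ∫ ξ, (starRingEnd ℂ) (cmap w hw hwp ξ) * (cmap v hv hvp ξ) ∂haarAddCircle := by
      apply integral_congr_ae
      filter_upwards [cmap_ae w hw hwp, cmap_ae v hv hvp] with ξ h1 h2
      rw [h1, h2]
    rw [hae, ← haar_interval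
      (fun ξ => (starRingEnd ℂ) (cmap w hw hwp ξ) * (cmap v hv hvp ξ))]
    apply intcong
    intro t ht
    rw [show cmap w hw hwp (↑t) = w t from AddCircle.liftIco_coe_apply (Ioo_subset_Ico_self ht),
      show cmap v hv hvp (↑t) = v t from AddCircle.liftIco_coe_apply (Ioo_subset_Ico_self ht)]

set_option maxHeartbeats 2000000 in
private lemma key2d (κ c : ℝ) (hc1 : c ≤ 1) (hg : 0 < κ ^ 2 / 2 - c)
    (h0 : κ ^ 4 / 4 ≤ (κ ^ 2 / 2 - c) * (4 + (κ ^ 2 / 2 - c)))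
    (x y : ℝ → ℝ) (hx : ContDiff ℝ 1 x) (hy : ContDiff ℝ 1 y)
    (hxp : ∀ t, x (t + 2 * π) = x t) (hyp : ∀ t, y (t + 2 * π) = y t) :
    c * ∫ t in (-π)..π, (x t ^ 2 + y t ^ 2) ≤
      (∫ t in (-π)..π, ((deriv x t) ^ 2 + (deriv y t) ^ 2))
        + κ ^ 2 * ∫ t in (-π)..π, (x t * Real.sin t - y t * Real.cos t) ^ 2 := by
  set g : ℝ := κ ^ 2 / 2 - c with hgdef
  -- endpoint conversion
  have hend : ∀ f : ℝ → ℝ, (∫ t in (-π)..π, f t) = ∫ t in (-π)..(-π + 2 * π), f t := by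
    intro f; congr 1; ring
  rw [hend, hend, hend]
  -- complex function z
  set z : ℝ → ℂ := fun t => (x t : ℂ) + (y t : ℂ) * Complex.I with hzdef
  have hxd : Differentiable ℝ x := hx.differentiable one_ne_zero
  have hyd : Differentiable ℝ y := hy.differentiable one_ne_zero
  have hzd : ∀ t, HasDerivAt z
      (Complex.ofReal (deriv x t) + Complex.ofReal (deriv y t) * Complex.I) t := fun t =>
    ((hxd t).hasDerivAt.ofReal_comp).add (((hyd t).hasDerivAt.ofReal_comp).mul_const Complex.I)
  have hdz : deriv z = fun t => Complex.ofReal (deriv x t) + Complex.ofReal (deriv y t) * Complex.I :=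
    funext fun t => (hzd t).deriv
  have hzc : ContDiff ℝ 1 z :=
    (Complex.ofRealCLM.contDiff.comp hx).add
      ((Complex.ofRealCLM.contDiff.comp hy).mul contDiff_const)
  have hzcont : Continuous z := hzc.continuous
  have hdzc : Continuous (deriv z) := hzc.continuous_deriv le_rfl
  have hzper : ∀ t, z (t + 2 * π) = z t := by
    intro t; simp only [hzdef, hxp, hyp]
  have hdxper : ∀ t, deriv x (t + 2 * π) = deriv x t := by
    intro t
    have hfx : (fun s => x (s + 2 * π)) = x := funext hxp
    calc deriv x (t + 2 * π) = deriv (fun s => x (s + 2 * π)) t :=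
          (deriv_comp_add_const x (2 * π) t).symm
      _ = deriv x t := by rw [hfx]
  have hdyper : ∀ t, deriv y (t + 2 * π) = deriv y t := by
    intro t
    have hfy : (fun s => y (s + 2 * π)) = y := funext hyp
    calc deriv y (t + 2 * π) = deriv (fun s => y (s + 2 * π)) t :=
          (deriv_comp_add_const y (2 * π) t).symm
      _ = deriv y t := by rw [hfy]
  have hdzper : ∀ t, deriv z (t + 2 * π) = deriv z t := by
    intro t; rw [hdz]; simp only [hdxper, hdyper]
  -- the auxiliary function
  set hf : ℝ → ℂ := fun t => (starRingEnd ℂ) (z t)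
      * Complex.exp (((2 * t : ℝ) : ℂ) * Complex.I) with hfdef
  have hfc : Continuous hf := by
    apply Continuous.mul
    · exact Complex.continuous_conj.comp hzcont
    · exact Complex.continuous_exp.comp (by fun_prop)
  have hfper : ∀ t, hf (t + 2 * π) = hf t := by
    intro t
    simp only [hfdef, hzper]
    congr 1
    have h1 : ((2 * (t + 2 * π) : ℝ) : ℂ) * Complex.I
        = ((2 * t : ℝ) : ℂ) * Complex.I + (2 : ℤ) * (2 * π * Complex.I) := by push_cast; ring
    rw [h1, Complex.exp_add, Complex.exp_int_mul_two_pi_mul_I, mul_one]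
  -- Fourier coefficients
  set F : ℤ → ℂ := FC z with hFdef
  set D : ℤ → ℂ := FC (deriv z) with hDdef
  have hDF : ∀ n : ℤ, D n = Complex.I * n * F n := fun n => FC_deriv z hzc hzper n
  have hnD : ∀ n : ℤ, ‖D n‖ ^ 2 = (n : ℝ) ^ 2 * ‖F n‖ ^ 2 := by
    intro n
    rw [hDF n, norm_mul, norm_mul, Complex.norm_I, one_mul, Complex.norm_intCast, mul_pow,
      _root_.sq_abs ((n : ℝ))]
  have hHF : ∀ n : ℤ, (starRingEnd ℂ) (FC hf n) = F (2 - n) := by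
    intro n
    rw [hfdef, FC_conj z n, Complex.conj_conj]
  -- Parseval
  obtain ⟨sZ, pZ⟩ := parsevalP z hzcont hzper
  obtain ⟨sD, pD⟩ := parsevalP (deriv z) hdzc hdzper
  obtain ⟨sI, pI⟩ := parseval_innerP hf z hfc hzcont hfper hzper
  -- weights
  set A : ℤ → ℝ := fun n => (n : ℝ) ^ 2 + g with hAdef
  have hApos : ∀ n : ℤ, 0 < A n := fun n => by
    have := sq_nonneg ((n : ℝ)); simp only [hAdef]; linarith
  have hdet : ∀ n : ℤ, (κ ^ 2 / 2) ^ 2 ≤ A (2 - n) * A n := by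
    intro n
    have hd := detfact g κ hg (by linarith) h0 n
    have e1 : A (2 - n) = (2 - (n : ℝ)) ^ 2 + g := by simp only [hAdef]; push_cast; ring
    have e2 : A n = (n : ℝ) ^ 2 + g := rfl
    rw [e1, e2]
    nlinarith [hd]
  -- summability with weights
  have hAsum_eq : (fun n : ℤ => A n * ‖F n‖ ^ 2) = fun n => ‖D n‖ ^ 2 + g * ‖F n‖ ^ 2 := by
    funext n; rw [hnD n]; simp only [hAdef]; ring
  have sA : Summable (fun n : ℤ => A n * ‖F n‖ ^ 2) := by
    rw [hAsum_eq]
    exact sD.add (sZ.mul_left g)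
  have sA2 : Summable (fun n : ℤ => A (2 - n) * ‖F (2 - n)‖ ^ 2) :=
    (Equiv.summable_iff (Equiv.subLeft (2 : ℤ))).mpr sA
  -- per-term bound
  have hterm : ∀ n : ℤ, κ ^ 2 / 2 * (F (2 - n) * F n).re
      ≤ (A (2 - n) * ‖F (2 - n)‖ ^ 2 + A n * ‖F n‖ ^ 2) / 2 := by
    intro n
    have h1 : (F (2 - n) * F n).re ≤ ‖F (2 - n)‖ * ‖F n‖ := by
      rw [← norm_mul]
      exact Complex.re_le_norm _
    have h2 := amgm (κ ^ 2 / 2) (A (2 - n)) (A n) ‖F (2 - n)‖ ‖F n‖ (hApos _) (hApos _)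
      (norm_nonneg _) (norm_nonneg _) (by positivity) (hdet n)
    calc κ ^ 2 / 2 * (F (2 - n) * F n).re ≤ κ ^ 2 / 2 * (‖F (2 - n)‖ * ‖F n‖) :=
          mul_le_mul_of_nonneg_left h1 (by positivity)
      _ ≤ _ := h2
  -- summability of lhs terms
  have hconj_eq : (fun n : ℤ => F (2 - n) * F n)
      = fun n => (starRingEnd ℂ) (FC hf n) * FC z n := by
    funext n; rw [hHF n]
  have sL0 : Summable (fun n : ℤ => ((starRingEnd ℂ) (FC hf n) * FC z n).re) := by
    have := sI.mapL (Complex.reCLM)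
    simpa using this
  have sL : Summable (fun n : ℤ => κ ^ 2 / 2 * (F (2 - n) * F n).re) := by
    apply Summable.mul_left
    have : (fun n : ℤ => (F (2 - n) * F n).re)
        = fun n => ((starRingEnd ℂ) (FC hf n) * FC z n).re := by
      funext n; rw [hHF n]
    rw [this]
    exact sL0
  -- the main estimate on sums
  have main : (∑' n : ℤ, κ ^ 2 / 2 * (F (2 - n) * F n).re) ≤ ∑' n : ℤ, A n * ‖F n‖ ^ 2 := by
    have step1 : (∑' n : ℤ, κ ^ 2 / 2 * (F (2 - n) * F n).re)
        ≤ ∑' n : ℤ, (A (2 - n) * ‖F (2 - n)‖ ^ 2 + A n * ‖F n‖ ^ 2) / 2 :=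
      Summable.tsum_le_tsum hterm sL ((sA2.add sA).div_const 2)
    have hswap : (∑' n : ℤ, A (2 - n) * ‖F (2 - n)‖ ^ 2) = ∑' n : ℤ, A n * ‖F n‖ ^ 2 := by
      have := (Equiv.subLeft (2 : ℤ)).tsum_eq (fun n : ℤ => A n * ‖F n‖ ^ 2)
      simpa using this
    have step2 : (∑' n : ℤ, (A (2 - n) * ‖F (2 - n)‖ ^ 2 + A n * ‖F n‖ ^ 2) / 2)
        = ∑' n : ℤ, A n * ‖F n‖ ^ 2 := by
      rw [tsum_div_const, Summable.tsum_add sA2 sA, hswap]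
      ring
    linarith [step1, step2.le, step2.ge]
  have hAtsum : (∑' n : ℤ, A n * ‖F n‖ ^ 2)
      = (∑' n : ℤ, ‖D n‖ ^ 2) + g * ∑' n : ℤ, ‖F n‖ ^ 2 := by
    rw [hAsum_eq, Summable.tsum_add sD (sZ.mul_left g), tsum_mul_left]
  -- norm integrands
  have hnz : ∀ t, ‖z t‖ ^ 2 = x t ^ 2 + y t ^ 2 := by
    intro t
    rw [show z t = (x t : ℂ) + (y t : ℂ) * Complex.I from rfl,
      Complex.sq_norm, Complex.normSq_add_mul_I]
  have hndz : ∀ t, ‖deriv z t‖ ^ 2 = deriv x t ^ 2 + deriv y t ^ 2 := by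
    intro t
    rw [hdz, Complex.sq_norm, Complex.normSq_add_mul_I]
  have f1 : 2 * π * ∑' n : ℤ, ‖F n‖ ^ 2
      = ∫ t in (-π)..(-π + 2 * π), (x t ^ 2 + y t ^ 2) := by
    rw [pZ]; exact intcong _ _ (fun t _ => hnz t)
  have f2 : 2 * π * ∑' n : ℤ, ‖D n‖ ^ 2
      = ∫ t in (-π)..(-π + 2 * π), (deriv x t ^ 2 + deriv y t ^ 2) := by
    rw [pD]; exact intcong _ _ (fun t _ => hndz t)
  -- pointwise identity
  have hpt : ∀ t : ℝ, ((starRingEnd ℂ) (hf t) * z t).re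
      = (x t ^ 2 + y t ^ 2) - 2 * (x t * Real.sin t - y t * Real.cos t) ^ 2 := by
    intro t
    have hconj : (starRingEnd ℂ) (hf t)
        = z t * Complex.exp (((-(2 * t) : ℝ) : ℂ) * Complex.I) := by
      simp only [hfdef]
      rw [map_mul, Complex.conj_conj, ← Complex.exp_conj]
      congr 2
      rw [map_mul, Complex.conj_I, Complex.conj_ofReal]
      push_cast; ring
    rw [hconj, Complex.exp_mul_I, ← Complex.ofReal_cos, ← Complex.ofReal_sin]
    rw [show z t = (x t : ℂ) + (y t : ℂ) * Complex.I from rfl]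
    simp only [Complex.add_re, Complex.add_im, Complex.mul_re, Complex.mul_im,
      Complex.ofReal_re, Complex.ofReal_im, Complex.I_re, Complex.I_im]
    rw [Real.cos_neg, Real.sin_neg, Real.cos_two_mul, Real.sin_two_mul]
    ring_nf
    nlinarith [Real.sin_sq_add_cos_sq t, sq_nonneg (x t), sq_nonneg (y t)]
  have hIcont : Continuous fun t => (starRingEnd ℂ) (hf t) * z t :=
    (Complex.continuous_conj.comp hfc).mul hzcont
  have hre_int : (∫ t in (-π)..(-π + 2 * π), (starRingEnd ℂ) (hf t) * z t).re
      = ∫ t in (-π)..(-π + 2 * π), ((starRingEnd ℂ) (hf t) * z t).re := by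
    have := Complex.reCLM.intervalIntegral_comp_comm
      (hIcont.intervalIntegrable (μ := volume) (-π) (-π + 2 * π))
    simpa using this.symm
  have hxc : Continuous x := hx.continuous
  have hyc : Continuous y := hy.continuous
  have f3base : (∫ t in (-π)..(-π + 2 * π), ((starRingEnd ℂ) (hf t) * z t).re)
      = (∫ t in (-π)..(-π + 2 * π), (x t ^ 2 + y t ^ 2))
        - 2 * ∫ t in (-π)..(-π + 2 * π), (x t * Real.sin t - y t * Real.cos t) ^ 2 := by
    rw [intervalIntegral.integral_congr (g := fun t => (x t ^ 2 + y t ^ 2)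
      - 2 * (x t * Real.sin t - y t * Real.cos t) ^ 2) (fun t _ => hpt t)]
    rw [← intervalIntegral.integral_const_mul]
    apply intervalIntegral.integral_sub
    · exact ((hxc.pow 2).add (hyc.pow 2)).intervalIntegrable _ _
    · exact (continuous_const.mul (((hxc.mul Real.continuous_sin).sub
        (hyc.mul Real.continuous_cos)).pow 2)).intervalIntegrable _ _
  -- assemble
  have hmul : 2 * π * (∑' n : ℤ, κ ^ 2 / 2 * (F (2 - n) * F n).re)
      ≤ 2 * π * ∑' n : ℤ, A n * ‖F n‖ ^ 2 :=
    mul_le_mul_of_nonneg_left main (by positivity)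
  have h1 : (∑' n : ℤ, (F (2 - n) * F n).re)
      = (∑' n : ℤ, (starRingEnd ℂ) (FC hf n) * FC z n).re := by
    have h2 := Complex.reCLM.map_tsum sI
    have h3 : (fun n : ℤ => (F (2 - n) * F n).re)
        = fun n : ℤ => Complex.reCLM ((starRingEnd ℂ) (FC hf n) * FC z n) := by
      funext n; rw [hHF n]; rfl
    rw [h3, ← h2]
    rfl
  have hre_smul : ((2 * π : ℝ) • ∑' n : ℤ, (starRingEnd ℂ) (FC hf n) * FC z n).re
      = 2 * π * (∑' n : ℤ, (starRingEnd ℂ) (FC hf n) * FC z n).re := by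
    rw [Complex.smul_re, smul_eq_mul]
  have hL : 2 * π * (∑' n : ℤ, κ ^ 2 / 2 * (F (2 - n) * F n).re)
      = κ ^ 2 / 2 * ((∫ t in (-π)..(-π + 2 * π), (x t ^ 2 + y t ^ 2))
        - 2 * ∫ t in (-π)..(-π + 2 * π), (x t * Real.sin t - y t * Real.cos t) ^ 2) := by
    rw [tsum_mul_left, h1]
    rw [show 2 * π * (κ ^ 2 / 2 * (∑' n : ℤ, (starRingEnd ℂ) (FC hf n) * FC z n).re)
        = κ ^ 2 / 2 * (2 * π * (∑' n : ℤ, (starRingEnd ℂ) (FC hf n) * FC z n).re) by ring]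
    rw [← hre_smul, pI, hre_int, f3base]
  have hR : 2 * π * (∑' n : ℤ, A n * ‖F n‖ ^ 2)
      = (∫ t in (-π)..(-π + 2 * π), (deriv x t ^ 2 + deriv y t ^ 2))
        + g * ∫ t in (-π)..(-π + 2 * π), (x t ^ 2 + y t ^ 2) := by
    rw [hAtsum, mul_add, f2, ← mul_assoc, mul_comm (2 * π) g, mul_assoc, f1]
  rw [hL, hR] at hmul
  rw [hgdef] at hmul
  linarith [hmul]

private lemma const_facts (κ : ℝ) (hκ : 0 < κ ^ 2) :
    poincareConst κ ≤ 1 ∧ 0 < κ ^ 2 / 2 - poincareConst κ ∧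
      κ ^ 4 / 4 ≤ (κ ^ 2 / 2 - poincareConst κ) * (4 + (κ ^ 2 / 2 - poincareConst κ)) := by
  unfold poincareConst
  by_cases h3 : 3 ≤ κ ^ 2
  · rw [if_pos h3]
    refine ⟨le_rfl, by linarith, ?_⟩
    nlinarith
  · rw [if_neg h3]
    push_neg at h3
    have h16 : (0:ℝ) < κ ^ 4 + 16 := by positivity
    have hκ4 : (0:ℝ) < κ ^ 4 := by nlinarith
    set R := Real.sqrt (κ ^ 4 + 16) with hRdef
    have hR2 : R ^ 2 = κ ^ 4 + 16 := Real.sq_sqrt h16.le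
    have hRpos : 0 < R := Real.sqrt_pos.mpr h16
    have hRgt4 : 4 < R := by nlinarith
    have hRle : κ ^ 2 + 2 ≤ R := by nlinarith
    refine ⟨by linarith, by linarith, ?_⟩
    nlinarith

/-- **Sharp Poincaré-type inequality in `H¹(S¹, ℝ³)`**:
`∫ |u'|² + κ² ∫ |u × n|² ≥ c_κ² ∫ |u|²` for every `C¹` `2π`-periodic `u : ℝ → ℝ³`. -/
theorem sharp_poincare_inequality
    (κ : ℝ) (hκ : 0 < κ ^ 2)
    (u : ℝ → Fin 3 → ℝ)
    (hu : ContDiff ℝ 1 u)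
    (hper : ∀ t : ℝ, u (t + 2 * π) = u t) :
    poincareConst κ * ∫ t in (-π)..π, sq3 (u t) ≤
      (∫ t in (-π)..π, sq3 (deriv u t))
        + κ ^ 2 * ∫ t in (-π)..π, sq3 (crossProduct (u t) (nvec t)) := by
  obtain ⟨hc1, hgpos, hquad⟩ := const_facts κ hκ
  have hui : ∀ i : Fin 3, ContDiff ℝ 1 (fun t => u t i) := fun i => contDiff_pi.mp hu i
  have hDif : Differentiable ℝ u := hu.differentiable one_ne_zero
  have hdcomp : ∀ (t : ℝ) (i : Fin 3), deriv (fun s => u s i) t = deriv u t i := fun t i =>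
    (hasDerivAt_pi.mp (hDif t).hasDerivAt i).deriv
  have hpercomp : ∀ (i : Fin 3) (t : ℝ), u (t + 2 * π) i = u t i := fun i t =>
    congrFun (hper t) i
  have hcont : ∀ i : Fin 3, Continuous (fun t => u t i) := fun i => (hui i).continuous
  have hcontd : ∀ i : Fin 3, Continuous (deriv (fun t => u t i)) := fun i =>
    (hui i).continuous_deriv le_rfl
  -- pointwise identities
  have hsq : ∀ t, sq3 (u t) = (u t 0 ^ 2 + u t 1 ^ 2) + u t 2 ^ 2 := fun t => by
    rw [sq3]
  have hsqd : ∀ t, sq3 (deriv u t)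
      = (deriv (fun s => u s 0) t ^ 2 + deriv (fun s => u s 1) t ^ 2)
        + deriv (fun s => u s 2) t ^ 2 := fun t => by
    rw [sq3, hdcomp t 0, hdcomp t 1, hdcomp t 2]
  have hcross : ∀ t, sq3 (crossProduct (u t) (nvec t))
      = ((u t 0) * Real.sin t - (u t 1) * Real.cos t) ^ 2 + u t 2 ^ 2 := by
    intro t
    rw [cross_apply, sq3]
    simp only [nvec, Matrix.cons_val_zero, Matrix.cons_val_one, Matrix.head_cons,
      Matrix.cons_val_two, Matrix.tail_cons]
    linear_combination (u t 2) ^ 2 * (Real.sin_sq_add_cos_sq t)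
  -- split the integrals
  have e1 : (∫ t in (-π)..π, sq3 (u t))
      = (∫ t in (-π)..π, (u t 0 ^ 2 + u t 1 ^ 2)) + ∫ t in (-π)..π, u t 2 ^ 2 := by
    rw [intervalIntegral.integral_congr (g := fun t => (u t 0 ^ 2 + u t 1 ^ 2) + u t 2 ^ 2)
      (fun t _ => hsq t)]
    exact intervalIntegral.integral_add
      ((((hcont 0).pow 2).add ((hcont 1).pow 2)).intervalIntegrable _ _)
      (((hcont 2).pow 2).intervalIntegrable _ _)
  have e2 : (∫ t in (-π)..π, sq3 (deriv u t))
      = (∫ t in (-π)..π, (deriv (fun s => u s 0) t ^ 2 + deriv (fun s => u s 1) t ^ 2))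
        + ∫ t in (-π)..π, deriv (fun s => u s 2) t ^ 2 := by
    rw [intervalIntegral.integral_congr
      (g := fun t => (deriv (fun s => u s 0) t ^ 2 + deriv (fun s => u s 1) t ^ 2)
        + deriv (fun s => u s 2) t ^ 2) (fun t _ => hsqd t)]
    exact intervalIntegral.integral_add
      ((((hcontd 0).pow 2).add ((hcontd 1).pow 2)).intervalIntegrable _ _)
      (((hcontd 2).pow 2).intervalIntegrable _ _)
  have e3 : (∫ t in (-π)..π, sq3 (crossProduct (u t) (nvec t)))
      = (∫ t in (-π)..π, ((u t 0) * Real.sin t - (u t 1) * Real.cos t) ^ 2)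
        + ∫ t in (-π)..π, u t 2 ^ 2 := by
    rw [intervalIntegral.integral_congr
      (g := fun t => ((u t 0) * Real.sin t - (u t 1) * Real.cos t) ^ 2 + u t 2 ^ 2)
      (fun t _ => hcross t)]
    exact intervalIntegral.integral_add
      ((((((hcont 0).mul Real.continuous_sin)).sub
        ((hcont 1).mul Real.continuous_cos)).pow 2).intervalIntegrable _ _)
      (((hcont 2).pow 2).intervalIntegrable _ _)
  -- 2D part
  have h2d := key2d κ (poincareConst κ) hc1 hgpos hquad (fun t => u t 0) (fun t => u t 1)
    (hui 0) (hui 1) (hpercomp 0) (hpercomp 1)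
  -- third component
  have h31 : 0 ≤ ∫ t in (-π)..π, deriv (fun s => u s 2) t ^ 2 :=
    intervalIntegral.integral_nonneg (by linarith [Real.pi_pos]) (fun t _ => sq_nonneg _)
  have h32 : 0 ≤ ∫ t in (-π)..π, u t 2 ^ 2 :=
    intervalIntegral.integral_nonneg (by linarith [Real.pi_pos]) (fun t _ => sq_nonneg _)
  have hcκ : poincareConst κ ≤ κ ^ 2 := by linarith
  rw [e1, e2, e3]
  have h33 : poincareConst κ * ∫ t in (-π)..π, u t 2 ^ 2
      ≤ κ ^ 2 * ∫ t in (-π)..π, u t 2 ^ 2 :=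
    mul_le_mul_of_nonneg_right hcκ h32
  nlinarith [h2d, h31, h32, h33]

end
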